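/- Let f = c₁X^{e₁} + ⋯ + c_t X^{e_t} be a multivariate polynomial over a finite field F_q with distinct exponent vectors e₁,…,e_t ∈ ℕⁿ, each coordinate of each eᵢ less than D. If a point α = (α₁,…,αₙ) is chosen uniformly at random from (F_q*)ⁿ, then the probability that α^{eᵢ} ≠ α^{eⱼ} for all i ≠ j is at least 1 − D·t·(t−1)/(2(q−1)). -/

import Mathlib

open scoped Classical

namespace Stmt0Aux
open Finset

lemma pow_card_le (F : Type*) [Field F] [Fintype F] (d : ℕ) (hd : 0 < d) (v : Fˣ) :
    (univ.filter (fun x : Fˣ => x ^ d = v)).card ≤ d := by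
  have h1 : (univ.filter (fun x : Fˣ => x ^ d = v)).card ≤
      (Polynomial.nthRoots d (v : F)).toFinset.card := by
    refine Finset.card_le_card_of_injOn (fun x => (x : F)) ?_ ?_
    · intro x hx
      simp only [Finset.mem_coe, Finset.mem_filter] at hx
      rw [Finset.mem_coe, Multiset.mem_toFinset, Polynomial.mem_nthRoots hd]
      show ((x : Fˣ) : F) ^ d = (v : F)
      exact_mod_cast hx.2
    · intro x _ y _ h
      exact Units.ext h
  exact h1.trans ((Multiset.toFinset_card_le _).trans (Polynomial.card_nthRoots d _))

lemma key' (F : Type*) [Field F] [Fintype F] (n D : ℕ) (a b : Fin n → ℕ)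
    (l₀ : Fin n) (hlt : b l₀ < a l₀) (haD : a l₀ ≤ D) :
    (univ.filter (fun α : Fin n → Fˣ => ∏ l, α l ^ a l = ∏ l, α l ^ b l)).card
      ≤ D * (Fintype.card Fˣ) ^ (n - 1) := by
  set d := a l₀ - b l₀ with hdd
  have hd : 0 < d := Nat.sub_pos_of_lt hlt
  have hdD : d ≤ D := le_trans (Nat.sub_le _ _) haD
  have hcond : ∀ α : Fin n → Fˣ,
      ((∏ l, α l ^ a l) = ∏ l, α l ^ b l) ↔
      α l₀ ^ d = (∏ l ∈ univ.erase l₀, α l ^ b l) *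
        (∏ l ∈ univ.erase l₀, α l ^ a l)⁻¹ := by
    intro α
    rw [← Finset.prod_erase_mul univ _ (mem_univ l₀),
        ← Finset.prod_erase_mul univ (fun l => α l ^ b l) (mem_univ l₀)]
    have hx : a l₀ = d + b l₀ := by omega
    rw [hx, pow_add, ← mul_assoc, mul_left_inj, eq_mul_inv_iff_mul_eq,
        mul_comm (α l₀ ^ d)]
  -- fiberwise counting
  have hmaps : ∀ α ∈ univ.filter (fun α : Fin n → Fˣ => ∏ l, α l ^ a l = ∏ l, α l ^ b l),
      (fun l : {l : Fin n // l ≠ l₀} => α l.1) ∈ (univ : Finset ({l : Fin n // l ≠ l₀} → Fˣ)) :=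
    fun _ _ => mem_univ _
  rw [Finset.card_eq_sum_card_fiberwise hmaps]
  have hfib : ∀ β : {l : Fin n // l ≠ l₀} → Fˣ,
      ((univ.filter (fun α : Fin n → Fˣ => ∏ l, α l ^ a l = ∏ l, α l ^ b l)).filter
        (fun α => (fun l : {l : Fin n // l ≠ l₀} => α l.1) = β)).card ≤ D := by
    intro β
    set v : Fˣ := (∏ l : {l : Fin n // l ≠ l₀}, β l ^ b l.1) *
        (∏ l : {l : Fin n // l ≠ l₀}, β l ^ a l.1)⁻¹ with hv
    have hsub : ∀ (c : Fin n → ℕ) (α : Fin n → Fˣ),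
        (fun l : {l : Fin n // l ≠ l₀} => α l.1) = β →
        (∏ l ∈ univ.erase l₀, α l ^ c l) = ∏ l : {l : Fin n // l ≠ l₀}, β l ^ c l.1 := by
      intro c α hβ
      rw [Finset.prod_subtype (p := fun l => l ≠ l₀) (univ.erase l₀) (by simp) (fun l => α l ^ c l)]
      exact Finset.prod_congr rfl fun l _ => by rw [← hβ]
    have hle : ((univ.filter (fun α : Fin n → Fˣ => ∏ l, α l ^ a l = ∏ l, α l ^ b l)).filter
        (fun α => (fun l : {l : Fin n // l ≠ l₀} => α l.1) = β)).card ≤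
        (univ.filter (fun x : Fˣ => x ^ d = v)).card := by
      refine Finset.card_le_card_of_injOn (fun α => α l₀) ?_ ?_
      · intro α hα
        simp only [Finset.mem_coe, Finset.mem_filter, Finset.mem_univ, true_and] at hα
        simp only [Finset.mem_coe, Finset.mem_filter, Finset.mem_univ, true_and]
        have := (hcond α).1 hα.1
        rw [hsub a α hα.2, hsub b α hα.2] at this
        exact this
      · intro α hα α' hα' h
        simp only [coe_filter, Set.mem_setOf_eq, Finset.mem_filter] at hα hα'
        funext l
        by_cases hl : l = l₀
        · rw [hl]; exact h
        · have := congrFun hα.2 ⟨l, hl⟩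
          have := congrFun hα'.2 ⟨l, hl⟩
          simp only [] at *
          rw [congrFun hα.2 ⟨l, hl⟩, congrFun hα'.2 ⟨l, hl⟩]
    exact hle.trans ((pow_card_le F d hd v).trans hdD)
  calc ∑ β : {l : Fin n // l ≠ l₀} → Fˣ,
        ((univ.filter (fun α : Fin n → Fˣ => ∏ l, α l ^ a l = ∏ l, α l ^ b l)).filter
          (fun α => (fun l : {l : Fin n // l ≠ l₀} => α l.1) = β)).card
      ≤ ∑ _β : {l : Fin n // l ≠ l₀} → Fˣ, D := Finset.sum_le_sum fun β _ => hfib β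
    _ = Fintype.card ({l : Fin n // l ≠ l₀} → Fˣ) * D := by
        rw [Finset.sum_const, Fintype.card, smul_eq_mul]
    _ = D * (Fintype.card Fˣ) ^ (n - 1) := by
        rw [Fintype.card_fun, mul_comm]
        congr 2
        rw [Fintype.card_subtype_compl, Fintype.card_subtype_eq, Fintype.card_fin]

lemma key (F : Type*) [Field F] [Fintype F] (n D : ℕ) (a b : Fin n → ℕ)
    (hab : a ≠ b) (haD : ∀ l, a l < D) (hbD : ∀ l, b l < D) :
    (univ.filter (fun α : Fin n → Fˣ => ∏ l, α l ^ a l = ∏ l, α l ^ b l)).card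
      ≤ D * (Fintype.card Fˣ) ^ (n - 1) := by
  obtain ⟨l₀, hl₀⟩ := Function.ne_iff.1 hab
  rcases hl₀.lt_or_gt with h | h
  · have : (univ.filter (fun α : Fin n → Fˣ => ∏ l, α l ^ a l = ∏ l, α l ^ b l)) =
        (univ.filter (fun α : Fin n → Fˣ => ∏ l, α l ^ b l = ∏ l, α l ^ a l)) := by
      apply Finset.filter_congr; intro α _; exact eq_comm
    rw [this]
    exact key' F n D b a l₀ h (hbD l₀).le
  · exact key' F n D a b l₀ h (haD l₀).le


-- count of strictly increasing pairs
lemma pairs_card (t : ℕ) :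
    ((univ : Finset (Fin t × Fin t)).filter (fun p => p.1 < p.2)).card * 2 = t * (t - 1) := by
  have h1 : ((univ : Finset (Fin t × Fin t)).filter (fun p => p.1 < p.2)).card
      = ∑ j : Fin t, (j : ℕ) := by
    rw [Finset.card_eq_sum_card_fiberwise
      (f := Prod.snd) (t := univ) (fun _ _ => mem_univ _)]
    refine Finset.sum_congr rfl fun j _ => ?_
    have h2 : ((univ : Finset (Fin t × Fin t)).filter (fun p => p.1 < p.2)).filter
        (fun p => p.2 = j) = (Finset.Iio j).image (fun i => (i, j)) := by
      ext p
      simp only [Finset.mem_filter, Finset.mem_image, Finset.mem_univ, true_and,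
        Finset.mem_Iio]
      constructor
      · rintro ⟨h, rfl⟩; exact ⟨p.1, h, rfl⟩
      · rintro ⟨i, hi, rfl⟩; exact ⟨hi, rfl⟩
    rw [h2, Finset.card_image_of_injective _ (fun i i' h => (Prod.mk.injEq _ _ _ _ ▸ h).1),
      Fin.card_Iio]
  rw [h1, Fin.sum_univ_eq_sum_range (fun i => i) t, Finset.sum_range_id_mul_two]


section
variable (F : Type*) [Field F] [Fintype F]

theorem stmt0' (n t D : ℕ) (c : Fin t → F) (hc : ∀ k, c k ≠ 0)
    (e : Fin t → Fin n → ℕ) (he : Function.Injective e)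
    (hD : ∀ k i, e k i < D)
    (key : ∀ (a b : Fin n → ℕ), a ≠ b → (∀ l, a l < D) → (∀ l, b l < D) →
      (univ.filter (fun α : Fin n → Fˣ => ∏ l, α l ^ a l = ∏ l, α l ^ b l)).card
        ≤ D * (Fintype.card Fˣ) ^ (n - 1))
    (pairs_card : ((univ : Finset (Fin t × Fin t)).filter (fun p => p.1 < p.2)).card * 2
        = t * (t - 1)) :
    ((1 : ℝ) - (D : ℝ) * t * ((t : ℝ) - 1) / (2 * ((Fintype.card F : ℝ) - 1))) *
        (Fintype.card (Fin n → Fˣ)) ≤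
      ((Finset.univ.filter (fun α : Fin n → Fˣ =>
        ∀ i j : Fin t, i ≠ j →
          (∏ l, α l ^ e i l) ≠ (∏ l, α l ^ e j l))).card : ℝ) := by
  set N := Fintype.card Fˣ with hN
  have hq2 : 2 ≤ Fintype.card F := Fintype.one_lt_card
  have hcardu : Fintype.card Fˣ = Fintype.card F - 1 := by
    classical
    rw [← Fintype.card_units (α := F)]
  have hNF : (Fintype.card F : ℝ) - 1 = (N : ℝ) := by
    rw [hN, hcardu, Nat.cast_sub (by omega)]; norm_num
  have hNpos : 0 < N := by omega
  have hcard_univ : Fintype.card (Fin n → Fˣ) = N ^ n := by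
    rw [Fintype.card_fun, Fintype.card_fin, hN]
  by_cases ht : t ≤ 1
  · have hsub : Subsingleton (Fin t) := by
      rcases Nat.le_one_iff_eq_zero_or_eq_one.1 ht with rfl | rfl
      · exact Fin.subsingleton_zero
      · exact Fin.subsingleton_one
    have hall : (Finset.univ.filter (fun α : Fin n → Fˣ =>
        ∀ i j : Fin t, i ≠ j →
          (∏ l, α l ^ e i l) ≠ (∏ l, α l ^ e j l))) = univ := by
      refine Finset.filter_true_of_mem fun α _ => fun i j hij => absurd (hsub.elim i j) hij
    rw [hall, Finset.card_univ]
    have h0 : (D : ℝ) * t * ((t : ℝ) - 1) = 0 := by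
      rcases Nat.le_one_iff_eq_zero_or_eq_one.1 ht with rfl | rfl <;> norm_num
    rw [h0]
    simp
  · push_neg at ht
    have hn : 1 ≤ n := by
      by_contra hn
      have hn0 : n = 0 := by omega
      subst hn0
      have h01 : (⟨0, by omega⟩ : Fin t) ≠ ⟨1, by omega⟩ := by
        intro h; exact absurd (Fin.mk.injEq _ _ _ _ ▸ h) (by norm_num)
      exact h01 (he (Subsingleton.elim _ _))
    set good := (Finset.univ.filter (fun α : Fin n → Fˣ =>
        ∀ i j : Fin t, i ≠ j →
          (∏ l, α l ^ e i l) ≠ (∏ l, α l ^ e j l))) with hgood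
    set bad := (Finset.univ.filter (fun α : Fin n → Fˣ =>
        ¬ ∀ i j : Fin t, i ≠ j →
          (∏ l, α l ^ e i l) ≠ (∏ l, α l ^ e j l))) with hbad
    have hsplit : good.card + bad.card = N ^ n := by
      rw [hgood, hbad, Finset.card_filter_add_card_filter_not, Finset.card_univ,
        hcard_univ]
    set P := ((univ : Finset (Fin t × Fin t)).filter (fun p => p.1 < p.2)) with hP
    have hbadsub : bad ⊆ P.biUnion (fun p =>
        univ.filter (fun α : Fin n → Fˣ => ∏ l, α l ^ e p.1 l = ∏ l, α l ^ e p.2 l)) := by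
      intro α hα
      rw [hbad, Finset.mem_filter] at hα
      push_neg at hα
      obtain ⟨-, i, j, hij, heq⟩ := hα
      rw [Finset.mem_biUnion]
      rcases hij.lt_or_gt with h | h
      · exact ⟨(i, j), by simp [hP, h], by simp [heq]⟩
      · exact ⟨(j, i), by simp [hP, h], by simp [heq.symm]⟩
    have hbadcard : bad.card ≤ P.card * (D * N ^ (n - 1)) := by
      calc bad.card ≤ (P.biUnion (fun p =>
          univ.filter (fun α : Fin n → Fˣ => ∏ l, α l ^ e p.1 l = ∏ l, α l ^ e p.2 l))).card :=
            Finset.card_le_card hbadsub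
        _ ≤ ∑ p ∈ P, (univ.filter (fun α : Fin n → Fˣ =>
              ∏ l, α l ^ e p.1 l = ∏ l, α l ^ e p.2 l)).card := Finset.card_biUnion_le
        _ ≤ ∑ _p ∈ P, D * N ^ (n - 1) := by
            refine Finset.sum_le_sum fun p hp => ?_
            have hpne : p.1 ≠ p.2 := by
              rw [hP, Finset.mem_filter] at hp; exact hp.2.ne
            exact key (e p.1) (e p.2) (fun h => hpne (he h)) (hD p.1) (hD p.2)
        _ = P.card * (D * N ^ (n - 1)) := by rw [Finset.sum_const, smul_eq_mul]
    -- real arithmetic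
    have hPcard : (P.card : ℝ) * 2 = (t : ℝ) * ((t : ℝ) - 1) := by
      have := pairs_card
      have h2 : ((P.card * 2 : ℕ) : ℝ) = ((t * (t - 1) : ℕ) : ℝ) := by rw [this]
      push_cast [Nat.cast_sub (by omega : 1 ≤ t)] at h2
      linarith
    have hbadR : (bad.card : ℝ) ≤ (t : ℝ) * ((t : ℝ) - 1) / 2 * (D * N ^ (n - 1)) := by
      have h1 : (bad.card : ℝ) ≤ (P.card : ℝ) * (D * N ^ (n - 1)) := by
        exact_mod_cast Nat.cast_le.2 hbadcard
      have h2 : (t : ℝ) * ((t : ℝ) - 1) / 2 = (P.card : ℝ) := by linarith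
      rw [h2]
      exact h1
    have hgoodR : (N : ℝ) ^ n - (bad.card : ℝ) ≤ (good.card : ℝ) := by
      have := hsplit
      have h2 : ((good.card + bad.card : ℕ) : ℝ) = ((N ^ n : ℕ) : ℝ) := by rw [this]
      push_cast at h2
      linarith
    rw [hNF, hcard_univ]
    refine le_trans ?_ hgoodR
    have hpow : (N : ℝ) ^ n = (N : ℝ) * (N : ℝ) ^ (n - 1) := by
      rw [← pow_succ']
      congr 1
      omega
    have hNR : (0 : ℝ) < (N : ℝ) := by exact_mod_cast hNpos
    push_cast
    rw [hpow]
    have expand : (1 - (D : ℝ) * t * ((t : ℝ) - 1) / (2 * (N : ℝ))) * ((N:ℝ) * (N:ℝ) ^ (n-1))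
        = (N:ℝ) * (N:ℝ)^(n-1) - (t : ℝ) * ((t : ℝ) - 1) / 2 * (D * (N:ℝ) ^ (n - 1)) := by
      field_simp
    rw [expand]
    linarith
end

end Stmt0Aux

/-- probability that a uniformly random point of (F_q*)^n is a
"good point" (all monomial values pairwise distinct) is at least
1 - D·t·(t-1)/(2(q-1)). -/
theorem stmt0 (F : Type*) [Field F] [Fintype F]
    (n t D : ℕ) (c : Fin t → F) (hc : ∀ k, c k ≠ 0)
    (e : Fin t → Fin n → ℕ) (he : Function.Injective e)
    (hD : ∀ k i, e k i < D) :
    ((1 : ℝ) - (D : ℝ) * t * ((t : ℝ) - 1) / (2 * ((Fintype.card F : ℝ) - 1))) *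
        (Fintype.card (Fin n → Fˣ)) ≤
      ((Finset.univ.filter (fun α : Fin n → Fˣ =>
        ∀ i j : Fin t, i ≠ j →
          (∏ l, α l ^ e i l) ≠ (∏ l, α l ^ e j l))).card : ℝ) :=
  Stmt0Aux.stmt0' F n t D c hc e he hD
    (fun a b hab ha hb => Stmt0Aux.key F n D a b hab ha hb)
    (Stmt0Aux.pairs_card t)
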